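/- Let f : ℝⁿ → ℝ have L-Lipschitz gradient. If x satisfies (Lα/2)‖∇f(x)‖₁ < ‖∇f(x)‖₂², then with g = ∇f(x), ‖g‖_∞ ≤ η, and X = x − α Σᵢ sgn(gᵢ)Δᵢ eᶦ where Δᵢ are independent Bernoulli with P[Δᵢ=1] = |gᵢ|/η, one has E[f(X)] < f(x). -/

import Mathlib

open scoped RealInnerProductSpace

noncomputable def bernWeight {n : ℕ} (p : Fin n → ℝ) (s : Fin n → Bool) : ℝ :=
  ∏ i, if s i then p i else 1 - p i

noncomputable def bernExp {n : ℕ} (p : Fin n → ℝ) (h : (Fin n → Bool) → ℝ) : ℝ :=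
  ∑ s : Fin n → Bool, bernWeight p s * h s

noncomputable def smgdStep {n : ℕ} (x : EuclideanSpace ℝ (Fin n)) (α : ℝ)
    (g : Fin n → ℝ) (s : Fin n → Bool) : EuclideanSpace ℝ (Fin n) :=
  x - α • ∑ i, (Real.sign (g i) * (if s i then 1 else 0)) • EuclideanSpace.single i (1 : ℝ)

section Aux

lemma mgd_descent {n : ℕ} (f : EuclideanSpace ℝ (Fin n) → ℝ) (L : ℝ) (hL : 0 ≤ L)
    (hdiff : Differentiable ℝ f)
    (hlip : ∀ x y : EuclideanSpace ℝ (Fin n), ‖gradient f x - gradient f y‖ ≤ L * ‖x - y‖)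
    (x y : EuclideanSpace ℝ (Fin n)) :
    f y ≤ f x + ⟪gradient f x, y - x⟫ + L / 2 * ‖y - x‖ ^ 2 := by
  set v := y - x with hv
  have hG : ∀ z, HasFDerivAt f (InnerProductSpace.toDual ℝ _ (gradient f z)) z :=
    fun z => (hdiff z).hasGradientAt.hasFDerivAt
  have hline : ∀ t : ℝ, HasDerivAt (fun t : ℝ => x + t • v) v t := by
    intro t
    simpa using ((hasDerivAt_id t).smul_const v).const_add x
  have hφ : ∀ t : ℝ, HasDerivAt (fun t => f (x + t • v)) ⟪gradient f (x + t • v), v⟫ t := by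
    intro t
    have h := (hG (x + t • v)).comp_hasDerivAt t (hline t)
    simpa [InnerProductSpace.toDual_apply_apply, Function.comp_def] using h
  have hGcont : Continuous (gradient f) := by
    have : LipschitzWith (Real.toNNReal L) (gradient f) := by
      apply LipschitzWith.of_dist_le_mul
      intro a b
      rw [dist_eq_norm, dist_eq_norm, Real.coe_toNNReal L hL]
      exact hlip a b
    exact this.continuous
  have hcont : Continuous fun t : ℝ => ⟪gradient f (x + t • v), v⟫ := by
    exact (hGcont.comp (by continuity)).inner continuous_const
  have key : f y - f x = ∫ t in (0:ℝ)..1, ⟪gradient f (x + t • v), v⟫ := by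
    have h := intervalIntegral.integral_eq_sub_of_hasDerivAt (a := 0) (b := 1)
      (f := fun t => f (x + t • v)) (fun t _ => hφ t) (hcont.intervalIntegrable 0 1)
    simp only [one_smul, zero_smul, add_zero] at h
    have hxy : x + v = y := by rw [hv]; abel
    rw [h, hxy]
  have hbound : ∀ t ∈ Set.Icc (0:ℝ) 1,
      ⟪gradient f (x + t • v), v⟫ ≤ ⟪gradient f x, v⟫ + L * t * ‖v‖ ^ 2 := by
    intro t ht
    have h1 : ⟪gradient f (x + t • v) - gradient f x, v⟫
        ≤ ‖gradient f (x + t • v) - gradient f x‖ * ‖v‖ := real_inner_le_norm _ _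
    have h2 : ‖gradient f (x + t • v) - gradient f x‖ ≤ L * (t * ‖v‖) := by
      have h3 := hlip (x + t • v) x
      simpa [norm_smul, abs_of_nonneg ht.1] using h3
    have h4 := inner_sub_left (𝕜 := ℝ) (gradient f (x + t • v)) (gradient f x) v
    have hn : 0 ≤ ‖v‖ := norm_nonneg v
    nlinarith [h1.trans (mul_le_mul_of_nonneg_right h2 hn)]
  have hub : ∀ t : ℝ, HasDerivAt (fun t : ℝ => ⟪gradient f x, v⟫ * t + L * ‖v‖ ^ 2 * t ^ 2 / 2)
      (⟪gradient f x, v⟫ + L * t * ‖v‖ ^ 2) t := by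
    intro t
    have h1 := (hasDerivAt_id t).const_mul (⟪gradient f x, v⟫)
    have h2 := ((hasDerivAt_pow 2 t).const_mul (L * ‖v‖ ^ 2)).div_const 2
    refine (h1.add h2).congr_deriv ?_
    ring
  have hpoly : Continuous fun t : ℝ => ⟪gradient f x, v⟫ + L * t * ‖v‖ ^ 2 :=
    continuous_const.add ((continuous_const.mul continuous_id).mul continuous_const)
  have hint2 : (∫ t in (0:ℝ)..1, (⟪gradient f x, v⟫ + L * t * ‖v‖ ^ 2))
      = ⟪gradient f x, v⟫ + L / 2 * ‖v‖ ^ 2 := by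
    have h := intervalIntegral.integral_eq_sub_of_hasDerivAt (a := 0) (b := 1)
      (fun t _ => hub t) (hpoly.intervalIntegrable 0 1)
    rw [h]; ring
  have hmono := intervalIntegral.integral_mono_on (μ := MeasureTheory.volume) (zero_le_one)
    (hcont.intervalIntegrable 0 1)
    (hpoly.intervalIntegrable 0 1) hbound
  rw [hint2] at hmono
  linarith [key ▸ hmono]

lemma mgd_sum_prod_bool {n : ℕ} (F : Fin n → Bool → ℝ) :
    ∑ s : Fin n → Bool, ∏ i, F i (s i) = ∏ i, (F i false + F i true) := by
  have h : ∀ i : Fin n, F i false + F i true = ∑ b : Bool, F i b := by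
    intro i; rw [Fintype.sum_bool]; ring
  simp_rw [h]
  rw [Finset.prod_univ_sum]
  rw [Fintype.piFinset_univ]

lemma mgd_weight_sum {n : ℕ} (p : Fin n → ℝ) : ∑ s : Fin n → Bool, bernWeight p s = 1 := by
  unfold bernWeight
  rw [mgd_sum_prod_bool (fun i b => if b then p i else 1 - p i)]
  simp

lemma mgd_coord_exp {n : ℕ} (p : Fin n → ℝ) (j : Fin n) :
    ∑ s : Fin n → Bool, bernWeight p s * (if s j then (1:ℝ) else 0) = p j := by
  have h : ∀ s : Fin n → Bool, bernWeight p s * (if s j then (1:ℝ) else 0)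
      = ∏ i, ((if s i then p i else 1 - p i) * (if i = j then (if s i then (1:ℝ) else 0) else 1)) := by
    intro s
    rw [Finset.prod_mul_distrib]
    unfold bernWeight
    congr 1
    rw [Finset.prod_ite_eq' Finset.univ j (fun i => if s i then (1:ℝ) else 0)]
    simp
  simp_rw [h]
  rw [mgd_sum_prod_bool (fun i b => (if b then p i else 1 - p i) * (if i = j then (if b then (1:ℝ) else 0) else 1))]
  rw [Finset.prod_eq_single j]
  · norm_num
  · intro i _ hij
    rw [if_neg hij]
    norm_num
  · intro h
    exact absurd (Finset.mem_univ j) h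

lemma mgd_bernExp_affine {n : ℕ} (p : Fin n → ℝ) (A : ℝ) (b : Fin n → ℝ) :
    bernExp p (fun s => A + ∑ j, b j * (if s j then (1:ℝ) else 0))
      = A + ∑ j, b j * p j := by
  unfold bernExp
  simp_rw [mul_add, Finset.sum_add_distrib, ← Finset.sum_mul, mgd_weight_sum, one_mul,
    Finset.mul_sum]
  congr 1
  rw [Finset.sum_comm]
  congr 1
  funext j
  simp_rw [mul_left_comm (bernWeight p _) (b j), ← Finset.mul_sum, mgd_coord_exp]

lemma mgd_bernExp_mono {n : ℕ} (p : Fin n → ℝ) (h1 h2 : (Fin n → Bool) → ℝ)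
    (hp : ∀ i, 0 ≤ p i) (hp1 : ∀ i, p i ≤ 1) (hle : ∀ s, h1 s ≤ h2 s) :
    bernExp p h1 ≤ bernExp p h2 := by
  unfold bernExp
  apply Finset.sum_le_sum
  intro s _
  have hw : 0 ≤ bernWeight p s := by
    unfold bernWeight
    apply Finset.prod_nonneg
    intro i _
    by_cases h : s i
    · simpa [h] using hp i
    · rw [if_neg h]
      linarith [hp1 i]
  exact mul_le_mul_of_nonneg_left (hle s) hw

lemma mgd_sum_apply {m : ℕ} {ι : Type*} [DecidableEq ι] (k : Finset ι) (v : ι → EuclideanSpace ℝ (Fin m))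
    (j : Fin m) : (∑ i ∈ k, v i) j = ∑ i ∈ k, v i j := by
  induction k using Finset.induction with
  | empty => rfl
  | insert _ _ hx ih => rw [Finset.sum_insert hx, Finset.sum_insert hx, PiLp.add_apply, ih]

lemma mgd_norm_sq {m : ℕ} (u : EuclideanSpace ℝ (Fin m)) : ‖u‖ ^ 2 = ∑ i, (u i) ^ 2 := by
  rw [EuclideanSpace.norm_eq, Real.sq_sqrt (by positivity)]
  simp [sq_abs]

lemma mgd_sign_mul (r : ℝ) : r * Real.sign r = |r| := by
  rcases lt_trichotomy r 0 with h | h | h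
  · rw [Real.sign_of_neg h, abs_of_neg h]; ring
  · simp [h]
  · rw [Real.sign_of_pos h, abs_of_pos h]; ring

lemma mgd_sign_sq_mul (r : ℝ) : (Real.sign r) ^ 2 * |r| = |r| := by
  rcases lt_trichotomy r 0 with h | h | h
  · rw [Real.sign_of_neg h]; ring
  · simp [h]
  · rw [Real.sign_of_pos h]; ring

end Aux

theorem stmt_13 (n : ℕ) (f : EuclideanSpace ℝ (Fin n) → ℝ) (L α η : ℝ)
    (hL : 0 ≤ L) (hα : 0 < α) (hη : 0 < η)
    (hdiff : Differentiable ℝ f)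
    (hlip : ∀ x y : EuclideanSpace ℝ (Fin n), ‖gradient f x - gradient f y‖ ≤ L * ‖x - y‖)
    (x : EuclideanSpace ℝ (Fin n)) (g : Fin n → ℝ) (hgdef : g = fun i => gradient f x i)
    (hg : ∀ i, |g i| ≤ η)
    (hdec : L * α / 2 * (∑ i, |gradient f x i|) < ‖gradient f x‖ ^ 2) :
    bernExp (fun i => |g i| / η) (fun s => f (smgdStep x α g s)) < f x := by
  classical
  have hgx : ∀ i, gradient f x i = g i := fun i => by rw [hgdef]
  set p : Fin n → ℝ := fun i => |g i| / η with hp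
  have hp0 : ∀ i, 0 ≤ p i := fun i => div_nonneg (abs_nonneg _) hη.le
  have hp1 : ∀ i, p i ≤ 1 := fun i => (div_le_one hη).2 (hg i)
  set b : Fin n → ℝ := fun j => -(α * |g j|) + L / 2 * α ^ 2 * (Real.sign (g j)) ^ 2 with hb
  -- pointwise descent bound
  have hpt : ∀ s : Fin n → Bool,
      f (smgdStep x α g s) ≤ f x + ∑ j, b j * (if s j then (1:ℝ) else 0) := by
    intro s
    set c : Fin n → ℝ := fun j => if s j then (1:ℝ) else 0 with hc
    have hdesc := mgd_descent f L hL hdiff hlip x (smgdStep x α g s)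
    have hdco : ∀ j, (smgdStep x α g s - x) j = -(α * (Real.sign (g j) * c j)) := by
      intro j
      have h1 : smgdStep x α g s - x
          = -(α • ∑ i, (Real.sign (g i) * c i) • EuclideanSpace.single i (1 : ℝ)) := by
        unfold smgdStep; rw [hc]; abel
      rw [h1, PiLp.neg_apply, PiLp.smul_apply, mgd_sum_apply]
      simp only [PiLp.smul_apply, EuclideanSpace.single_apply, smul_eq_mul]
      rw [Finset.sum_eq_single j]
      · simp
      · intro i _ hij
        simp [Ne.symm hij]
      · intro h; exact absurd (Finset.mem_univ j) h
    have hinner : ⟪gradient f x, smgdStep x α g s - x⟫ = ∑ j, -(α * (|g j| * c j)) := by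
      rw [PiLp.inner_apply]
      apply Finset.sum_congr rfl
      intro j _
      rw [RCLike.inner_apply, conj_trivial, hdco j, hgx j]
      have hs := mgd_sign_mul (g j)
      have h5 : -(α * (Real.sign (g j) * c j)) * g j = -(α * ((g j * Real.sign (g j)) * c j)) := by
        ring
      rw [h5, hs]
    have hnorm : ‖smgdStep x α g s - x‖ ^ 2 = ∑ j, α ^ 2 * ((Real.sign (g j)) ^ 2 * c j) := by
      rw [mgd_norm_sq]
      apply Finset.sum_congr rfl
      intro j _
      rw [hdco j]
      have hcs : c j ^ 2 = c j := by
        rw [hc]; by_cases h : s j <;> simp [h]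
      have h5 : (-(α * (Real.sign (g j) * c j))) ^ 2 = α ^ 2 * ((Real.sign (g j)) ^ 2 * c j ^ 2) := by
        ring
      rw [h5, hcs]
    rw [hinner, hnorm] at hdesc
    refine hdesc.trans (le_of_eq ?_)
    have heq : ∑ j, b j * (if s j then (1:ℝ) else 0)
        = (∑ j, -(α * (|g j| * c j))) + L / 2 * ∑ j, α ^ 2 * ((Real.sign (g j)) ^ 2 * c j) := by
      rw [Finset.mul_sum, ← Finset.sum_add_distrib]
      apply Finset.sum_congr rfl
      intro j _
      simp only [hb, hc]
      ring
    rw [heq]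
    ring
  have hE := mgd_bernExp_mono p _ _ hp0 hp1 hpt
  rw [mgd_bernExp_affine p (f x) b] at hE
  have hnormG : ‖gradient f x‖ ^ 2 = ∑ i, (g i) ^ 2 := by
    rw [mgd_norm_sq]
    exact Finset.sum_congr rfl fun i _ => by rw [hgx i]
  have hdec' : L * α / 2 * (∑ i, |g i|) < ∑ i, (g i) ^ 2 := by
    rw [← hnormG]
    have : (∑ i, |gradient f x i|) = ∑ i, |g i| :=
      Finset.sum_congr rfl fun i _ => by rw [hgx i]
    rw [← this]
    exact hdec
  have hfin : ∑ j, b j * p j < 0 := by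
    have e1 : ∀ j, b j * p j = (α / η) * ((L * α / 2) * |g j| - (g j) ^ 2) := by
      intro j
      have h3 : |g j| * |g j| = (g j) ^ 2 := by rw [← sq_abs]; ring
      have h2 := mgd_sign_sq_mul (g j)
      have h4 : b j * p j
          = (1 / η) * (-(α * (|g j| * |g j|)) + (L / 2 * α ^ 2) * ((Real.sign (g j)) ^ 2 * |g j|)) := by
        simp only [hb, hp]
        ring
      rw [h4, h2, h3]
      ring
    have e2 : ∑ j, b j * p j = (α / η) * ((L * α / 2) * (∑ j, |g j|) - ∑ j, (g j) ^ 2) := by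
      rw [Finset.sum_congr rfl (fun j _ => e1 j), ← Finset.mul_sum]
      congr 1
      rw [Finset.sum_sub_distrib, ← Finset.mul_sum]
    rw [e2]
    exact mul_neg_of_pos_of_neg (div_pos hα hη) (by linarith)
  linarith
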